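/- Let A = FᵀF be an n×n real symmetric positive semidefinite matrix with A ≠ 0 (F an m×n real matrix), B an n×n real symmetric positive definite matrix, x ∈ ℝⁿ with xᵀAx > 0, ρ ≥ 1, and λ₁ = max_{z≠0} (zᵀAz)/(zᵀBz). Let v ∈ ℝᵐ satisfy vᵀv = 1/ρ, set q = FB⁻¹Ax, D = qqᵀ, and C = ρI − FB⁻¹Fᵀ/(2(xᵀAx)^{1/2}). If 1 − λ₁/(2ρ(xᵀAx)^{1/2}) > 0 and vᵀCv > 0, then (vᵀq)² ≤ (vᵀDv)/(vᵀCv) ≤ (vᵀq)²/(1 − λ₁/(2ρ(xᵀAx)^{1/2})). -/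

import Mathlib

open Matrix

/-- Relaxation bounds: for `v` with `vᵀv = 1/ρ`, if `1 − λ₁/(2ρ√(xᵀAx)) > 0` and
`vᵀCv > 0`, then `(vᵀq)² ≤ (vᵀDv)/(vᵀCv) ≤ (vᵀq)²/(1 − λ₁/(2ρ√(xᵀAx)))`. -/
theorem stmt_18 {n m : ℕ} (A B : Matrix (Fin n) (Fin n) ℝ)
    (F : Matrix (Fin m) (Fin n) ℝ)
    (hA : A.PosSemidef) (hA0 : A ≠ 0) (hAF : A = Fᵀ * F) (hB : B.PosDef)
    (x : Fin n → ℝ) (hx : 0 < x ⬝ᵥ A *ᵥ x) (ρ : ℝ) (hρ : 1 ≤ ρ)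
    (lam1 : ℝ)
    (hlam : IsGreatest
      {r : ℝ | ∃ z : Fin n → ℝ, z ≠ 0 ∧ r = (z ⬝ᵥ A *ᵥ z) / (z ⬝ᵥ B *ᵥ z)} lam1)
    (v : Fin m → ℝ) (hvv : v ⬝ᵥ v = 1 / ρ)
    (q : Fin m → ℝ) (hq : q = F *ᵥ (B⁻¹ *ᵥ (A *ᵥ x)))
    (D C : Matrix (Fin m) (Fin m) ℝ) (hD : D = vecMulVec q q)
    (hC : C = ρ • (1 : Matrix (Fin m) (Fin m) ℝ)
      - (2 * Real.sqrt (x ⬝ᵥ A *ᵥ x))⁻¹ • (F * B⁻¹ * Fᵀ))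
    (hpos : 0 < 1 - lam1 / (2 * ρ * Real.sqrt (x ⬝ᵥ A *ᵥ x)))
    (hCv : 0 < v ⬝ᵥ C *ᵥ v) :
    (v ⬝ᵥ q) ^ 2 ≤ (v ⬝ᵥ D *ᵥ v) / (v ⬝ᵥ C *ᵥ v) ∧
    (v ⬝ᵥ D *ᵥ v) / (v ⬝ᵥ C *ᵥ v) ≤
      (v ⬝ᵥ q) ^ 2 / (1 - lam1 / (2 * ρ * Real.sqrt (x ⬝ᵥ A *ᵥ x))) := by
  have hρ0 : (0:ℝ) < ρ := lt_of_lt_of_le one_pos hρ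
  set sA := Real.sqrt (x ⬝ᵥ A *ᵥ x) with hsA
  have hsqrt : 0 < sA := Real.sqrt_pos.mpr hx
  -- vᵀ D v = (vᵀq)²
  have hDv : v ⬝ᵥ D *ᵥ v = (v ⬝ᵥ q) ^ 2 := by
    subst hD
    simp only [Matrix.mulVec, dotProduct, Matrix.vecMulVec_apply]
    rw [pow_two, Finset.sum_mul_sum]
    refine Finset.sum_congr rfl fun i _ => ?_
    simp only [Finset.mul_sum]
    refine Finset.sum_congr rfl fun j _ => ?_
    ring
  -- key quantity
  set s := v ⬝ᵥ (F * B⁻¹ * Fᵀ) *ᵥ v with hsdef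
  set u := Fᵀ *ᵥ v with hu
  set z := B⁻¹ *ᵥ u with hz
  have hBinv : B * B⁻¹ = 1 :=
    Matrix.mul_nonsing_inv B (isUnit_iff_ne_zero.mpr hB.det_pos.ne')
  have hBz : B *ᵥ z = u := by
    rw [hz, Matrix.mulVec_mulVec, hBinv, Matrix.one_mulVec]
  have hFz : (F * B⁻¹ * Fᵀ) *ᵥ v = F *ᵥ z := by
    rw [hz, hu, Matrix.mulVec_mulVec, Matrix.mulVec_mulVec]
  have hsu : s = u ⬝ᵥ z := by
    rw [hsdef, hFz, Matrix.dotProduct_mulVec, hu, ← Matrix.vecMul_transpose,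
      Matrix.transpose_transpose]
  have hzB : z ⬝ᵥ B *ᵥ z = s := by
    rw [hBz, hsu, dotProduct_comm]
  have hzA : z ⬝ᵥ A *ᵥ z = (F *ᵥ z) ⬝ᵥ (F *ᵥ z) := by
    rw [hAF, ← Matrix.mulVec_mulVec, Matrix.dotProduct_mulVec,
      Matrix.vecMul_transpose]
  have hsv : s = v ⬝ᵥ (F *ᵥ z) := by rw [hsdef, hFz]
  have hx0 : x ≠ 0 := by
    intro h; rw [h] at hx; simp at hx
  have hlam_pos : 0 < lam1 := by
    have hmem : (x ⬝ᵥ A *ᵥ x) / (x ⬝ᵥ B *ᵥ x) ∈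
        {r : ℝ | ∃ z : Fin n → ℝ, z ≠ 0 ∧ r = (z ⬝ᵥ A *ᵥ z) / (z ⬝ᵥ B *ᵥ z)} :=
      ⟨x, hx0, rfl⟩
    have hBx : 0 < x ⬝ᵥ B *ᵥ x := by
      have := hB.dotProduct_mulVec_pos hx0
      simpa using this
    exact lt_of_lt_of_le (div_pos hx hBx) (hlam.2 hmem)
  -- s ≥ 0 and s ≤ lam1 * (v ⬝ᵥ v)
  have hs_bounds : 0 ≤ s ∧ s ≤ lam1 * (v ⬝ᵥ v) := by
    rcases eq_or_ne z 0 with hz0 | hz0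
    · have hs0 : s = 0 := by rw [hsu, hz0]; simp
      constructor
      · rw [hs0]
      · rw [hs0, hvv]
        positivity
    · have hspos : 0 < s := by
        rw [← hzB]
        have := hB.dotProduct_mulVec_pos hz0
        simpa using this
      have hratio : (z ⬝ᵥ A *ᵥ z) / (z ⬝ᵥ B *ᵥ z) ≤ lam1 :=
        hlam.2 ⟨z, hz0, rfl⟩
      have hAle : (F *ᵥ z) ⬝ᵥ (F *ᵥ z) ≤ lam1 * s := by
        rw [← hzA]
        rw [hzB] at hratio
        exact (div_le_iff₀ hspos).mp hratio
      -- Cauchy-Schwarz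
      have hcs : s ^ 2 ≤ (v ⬝ᵥ v) * ((F *ᵥ z) ⬝ᵥ (F *ᵥ z)) := by
        rw [hsv]
        have := Finset.sum_mul_sq_le_sq_mul_sq Finset.univ v (F *ᵥ z)
        simpa [dotProduct, pow_two] using this
      have hvv0 : 0 ≤ v ⬝ᵥ v := by rw [hvv]; positivity
      constructor
      · exact hspos.le
      · nlinarith
  obtain ⟨hs0, hsle⟩ := hs_bounds
  -- vᵀ C v = 1 - s / (2 sA)
  have hCeq : v ⬝ᵥ C *ᵥ v = 1 - s / (2 * sA) := by
    rw [hC, Matrix.sub_mulVec, dotProduct_sub, Matrix.smul_mulVec,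
      Matrix.smul_mulVec, Matrix.one_mulVec, dotProduct_smul,
      dotProduct_smul, hvv, ← hsdef]
    simp only [smul_eq_mul]
    field_simp
  have hCle1 : v ⬝ᵥ C *ᵥ v ≤ 1 := by
    rw [hCeq]
    have : 0 ≤ s / (2 * sA) := by positivity
    linarith
  have hCge : 1 - lam1 / (2 * ρ * sA) ≤ v ⬝ᵥ C *ᵥ v := by
    rw [hCeq]
    have h1 : s / (2 * sA) ≤ (lam1 * (1/ρ)) / (2 * sA) := by
      gcongr
      rw [← hvv]; exact hsle
    have h2 : (lam1 * (1/ρ)) / (2 * sA) = lam1 / (2 * ρ * sA) := by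
      rw [mul_one_div, div_div]
      congr 1; ring
    rw [h2] at h1
    linarith
  constructor
  · rw [hDv, le_div_iff₀ hCv]
    nlinarith [sq_nonneg (v ⬝ᵥ q)]
  · rw [hDv]
    gcongr
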